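/- Let V be a finite-dimensional ℚ-vector space. Then R(V) is spanned by the image of ⋆; that is, the ℚ-linear span of the set { ⋆(x₁, x₂, x₃, x₄, x₅) : x₁,…,x₅ ∈ V } equals R(V). -/

import Mathlib

/-!
Common constructions: for a `ℚ`-vector space `V`, the symmetric powers
`P²V, P³V, P⁴V, P⁵V` (as `SqM V`, `CubM V`, `QuarM V`, `QuinM V`), built as iterated
quotients of tensor products, with the multiplication maps between them; the exterior
square `Λ²W` (as `AltM W`) with the wedge map; and the 5-linear map `⋆` (as `star5`).
-/

open TensorProduct

noncomputable section

variable (V W : Type) [AddCommGroup V] [Module ℚ V] [AddCommGroup W] [Module ℚ W]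

/-- The relations defining the symmetric square `P²V` as a quotient of `V ⊗ V`. -/
def sqRel : Submodule ℚ (V ⊗[ℚ] V) :=
  Submodule.span ℚ {z | ∃ x y : V, z = x ⊗ₜ[ℚ] y - y ⊗ₜ[ℚ] x}

/-- The symmetric square `P²V`. -/
abbrev SqM : Type := (V ⊗[ℚ] V) ⧸ sqRel V

/-- The product `V × V → P²V`, `(x, y) ↦ xy`. -/
def sqm : V →ₗ[ℚ] V →ₗ[ℚ] SqM V :=
  (TensorProduct.mk ℚ V V).compr₂ (sqRel V).mkQ

/-- The relations presenting the symmetric cube `P³V` as a quotient of `V ⊗ P²V`. -/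
def cubRel : Submodule ℚ (V ⊗[ℚ] SqM V) :=
  Submodule.span ℚ {z | ∃ x y w : V, z = x ⊗ₜ[ℚ] sqm V y w - y ⊗ₜ[ℚ] sqm V x w}

/-- The symmetric cube `P³V`. -/
abbrev CubM : Type := (V ⊗[ℚ] SqM V) ⧸ cubRel V

/-- The product `V × P²V → P³V`. -/
def mulC : V →ₗ[ℚ] SqM V →ₗ[ℚ] CubM V :=
  (TensorProduct.mk ℚ V (SqM V)).compr₂ (cubRel V).mkQ

/-- The relations presenting `P⁴V` as a quotient of `V ⊗ P³V`. -/
def quarRel : Submodule ℚ (V ⊗[ℚ] CubM V) :=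
  Submodule.span ℚ {z | ∃ (x y : V) (u : SqM V), z = x ⊗ₜ[ℚ] mulC V y u - y ⊗ₜ[ℚ] mulC V x u}

/-- The symmetric fourth power `P⁴V`. -/
abbrev QuarM : Type := (V ⊗[ℚ] CubM V) ⧸ quarRel V

/-- The product `V × P³V → P⁴V`. -/
def mulQ : V →ₗ[ℚ] CubM V →ₗ[ℚ] QuarM V :=
  (TensorProduct.mk ℚ V (CubM V)).compr₂ (quarRel V).mkQ

/-- The relations presenting `P⁵V` as a quotient of `V ⊗ P⁴V`. -/
def quinRel : Submodule ℚ (V ⊗[ℚ] QuarM V) :=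
  Submodule.span ℚ {z | ∃ (x y : V) (c : CubM V), z = x ⊗ₜ[ℚ] mulQ V y c - y ⊗ₜ[ℚ] mulQ V x c}

/-- The symmetric fifth power `P⁵V`. -/
abbrev QuinM : Type := (V ⊗[ℚ] QuarM V) ⧸ quinRel V

/-- The product `V × P⁴V → P⁵V`. -/
def mulQn : V →ₗ[ℚ] QuarM V →ₗ[ℚ] QuinM V :=
  (TensorProduct.mk ℚ V (QuarM V)).compr₂ (quinRel V).mkQ

/-- The relations defining the exterior square `Λ²W` as a quotient of `W ⊗ W`. -/
def altRel2 : Submodule ℚ (W ⊗[ℚ] W) :=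
  Submodule.span ℚ {z | ∃ x : W, z = x ⊗ₜ[ℚ] x}

/-- The exterior square `Λ²W`. -/
abbrev AltM : Type := (W ⊗[ℚ] W) ⧸ altRel2 W

/-- The wedge product `W × W → Λ²W`. -/
def wdg : W →ₗ[ℚ] W →ₗ[ℚ] AltM W :=
  (TensorProduct.mk ℚ W W).compr₂ (altRel2 W).mkQ

/-- The element `⋆(x₁,…,x₅) = Σ_{i ∈ ℤ/5} xᵢ ⊗ (x_{i+1}x_{i+2} ∧ x_{i+3}x_{i+4})`
of `V ⊗ Λ²(P²V)`. -/
def star5 (x₁ x₂ x₃ x₄ x₅ : V) : V ⊗[ℚ] AltM (SqM V) :=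
    x₁ ⊗ₜ[ℚ] wdg (SqM V) (sqm V x₂ x₃) (sqm V x₄ x₅)
  + x₂ ⊗ₜ[ℚ] wdg (SqM V) (sqm V x₃ x₄) (sqm V x₅ x₁)
  + x₃ ⊗ₜ[ℚ] wdg (SqM V) (sqm V x₄ x₅) (sqm V x₁ x₂)
  + x₄ ⊗ₜ[ℚ] wdg (SqM V) (sqm V x₅ x₁) (sqm V x₂ x₃)
  + x₅ ⊗ₜ[ℚ] wdg (SqM V) (sqm V x₁ x₂) (sqm V x₃ x₄)


/-! ### Auxiliary development -/

section Aux

lemma sqm_apply' (x y : V) : sqm V x y = (sqRel V).mkQ (x ⊗ₜ[ℚ] y) := rfl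

lemma wdg_apply' (u v : W) : wdg W u v = (altRel2 W).mkQ (u ⊗ₜ[ℚ] v) := rfl

lemma mulC_apply' (x : V) (u : SqM V) : mulC V x u = (cubRel V).mkQ (x ⊗ₜ[ℚ] u) := rfl

lemma sqm_comm (x y : V) : sqm V x y = sqm V y x := by
  rw [sqm_apply', sqm_apply', Submodule.mkQ_apply, Submodule.mkQ_apply,
    Submodule.Quotient.eq]
  exact Submodule.subset_span ⟨x, y, rfl⟩

lemma wdg_swap (u v : W) : wdg W u v = - wdg W v u := by
  rw [wdg_apply', wdg_apply', eq_neg_iff_add_eq_zero, ← map_add, Submodule.mkQ_apply,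
    Submodule.Quotient.mk_eq_zero]
  have h : u ⊗ₜ[ℚ] v + v ⊗ₜ[ℚ] u
      = (u + v) ⊗ₜ[ℚ] (u + v) - u ⊗ₜ[ℚ] u - v ⊗ₜ[ℚ] v := by
    simp [TensorProduct.tmul_add, TensorProduct.add_tmul]; abel
  rw [h]
  exact sub_mem (sub_mem (Submodule.subset_span ⟨u + v, rfl⟩)
    (Submodule.subset_span ⟨u, rfl⟩)) (Submodule.subset_span ⟨v, rfl⟩)

lemma mulC_swap (p q r : V) : mulC V p (sqm V q r) = mulC V q (sqm V p r) := by
  rw [mulC_apply', mulC_apply', Submodule.mkQ_apply, Submodule.mkQ_apply,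
    Submodule.Quotient.eq]
  exact Submodule.subset_span ⟨p, q, r, rfl⟩

/-- The trilinear map `(p, q, r) ↦ q ⊗ rp + r ⊗ pq` (with `p` a parameter). -/
def tau3 (p : V) : V →ₗ[ℚ] V →ₗ[ℚ] (V ⊗[ℚ] SqM V) :=
  LinearMap.mk₂ ℚ (fun q r => q ⊗ₜ[ℚ] sqm V r p + r ⊗ₜ[ℚ] sqm V p q)
    (by intro q q' r; simp [TensorProduct.add_tmul, TensorProduct.tmul_add, map_add]; abel)
    (by intro c q r; simp [TensorProduct.smul_tmul', TensorProduct.tmul_smul, smul_add])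
    (by intro q r r'; simp [TensorProduct.add_tmul, TensorProduct.tmul_add, map_add]; abel)
    (by intro c q r; simp [TensorProduct.smul_tmul', TensorProduct.tmul_smul, smul_add])

def tau2 (p : V) : SqM V →ₗ[ℚ] (V ⊗[ℚ] SqM V) :=
  Submodule.liftQ _ (TensorProduct.lift (tau3 V p)) (by
    refine Submodule.span_le.2 ?_
    rintro z ⟨x, y, rfl⟩
    simp only [SetLike.mem_coe, LinearMap.mem_ker, map_sub, TensorProduct.lift.tmul]
    simp only [tau3, LinearMap.mk₂_apply]
    rw [sqm_comm V y p, sqm_comm V p x]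
    abel)

def tau : V →ₗ[ℚ] SqM V →ₗ[ℚ] (V ⊗[ℚ] SqM V) where
  toFun := tau2 V
  map_add' p p' := by
    apply Submodule.linearMap_qext
    apply TensorProduct.ext'
    intro q r
    simp [tau2, tau3, TensorProduct.tmul_add, map_add]
    abel
  map_smul' c p := by
    apply Submodule.linearMap_qext
    apply TensorProduct.ext'
    intro q r
    simp [tau2, tau3, TensorProduct.tmul_smul, map_smul, smul_add]

/-- Comultiplication `P³V → V ⊗ P²V`, `pqr ↦ p⊗qr + q⊗rp + r⊗pq`. -/
def delta : CubM V →ₗ[ℚ] (V ⊗[ℚ] SqM V) :=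
  Submodule.liftQ _ (LinearMap.id + TensorProduct.lift (tau V)) (by
    refine Submodule.span_le.2 ?_
    rintro z ⟨x, y, w, rfl⟩
    simp only [SetLike.mem_coe, LinearMap.mem_ker, map_sub, LinearMap.add_apply,
      LinearMap.id_apply, TensorProduct.lift.tmul]
    have h1 : ∀ a b c : V, (tau V) a (sqm V b c) = b ⊗ₜ[ℚ] sqm V c a + c ⊗ₜ[ℚ] sqm V a b := by
      intro a b c
      show tau2 V a (sqm V b c) = _
      rw [sqm_apply']
      simp [tau2, tau3]
    rw [h1, h1, sqm_comm V w x, sqm_comm V y w, sqm_comm V y x]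
    abel)

lemma delta_mulC (p q r : V) :
    delta V (mulC V p (sqm V q r))
      = p ⊗ₜ[ℚ] sqm V q r + q ⊗ₜ[ℚ] sqm V r p + r ⊗ₜ[ℚ] sqm V p q := by
  rw [mulC_apply']
  rw [delta, Submodule.mkQ_apply]
  erw [Submodule.liftQ_apply]
  simp only [LinearMap.add_apply, LinearMap.id_apply, TensorProduct.lift.tmul]
  have h1 : (tau V) p (sqm V q r) = q ⊗ₜ[ℚ] sqm V r p + r ⊗ₜ[ℚ] sqm V p q := by
    show tau2 V p (sqm V q r) = _
    rw [sqm_apply']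
    simp [tau2, tau3]
  rw [h1]
  abel

end Aux

section Aux2

/-- The splitting map `s : P³V ⊗ P²V → V ⊗ Λ²(P²V)`. -/
def sMap : (CubM V ⊗[ℚ] SqM V) →ₗ[ℚ] (V ⊗[ℚ] AltM (SqM V)) :=
  LinearMap.lTensor V (altRel2 (SqM V)).mkQ ∘ₗ
    (TensorProduct.assoc ℚ V (SqM V) (SqM V)).toLinearMap ∘ₗ
    LinearMap.rTensor (SqM V) (delta V)

lemma sMap_apply (p q r : V) (u : SqM V) :
    sMap V (mulC V p (sqm V q r) ⊗ₜ[ℚ] u)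
      = p ⊗ₜ[ℚ] wdg (SqM V) (sqm V q r) u + q ⊗ₜ[ℚ] wdg (SqM V) (sqm V r p) u
        + r ⊗ₜ[ℚ] wdg (SqM V) (sqm V p q) u := by
  simp only [sMap, LinearMap.comp_apply, LinearMap.rTensor_tmul, delta_mulC,
    TensorProduct.add_tmul, map_add, LinearEquiv.coe_coe, TensorProduct.assoc_tmul,
    LinearMap.lTensor_tmul, wdg_apply']

lemma span_sqm_top : Submodule.span ℚ {w : SqM V | ∃ a b : V, w = sqm V a b} = ⊤ := by
  rw [eq_top_iff]
  rintro u -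
  obtain ⟨t, rfl⟩ := Submodule.mkQ_surjective _ u
  induction t using TensorProduct.induction_on with
  | zero => simpa using zero_mem _
  | tmul a b => exact Submodule.subset_span ⟨a, b, rfl⟩
  | add s t hs ht => rw [map_add]; exact add_mem hs ht

lemma span_wdg_top : Submodule.span ℚ {w : AltM W | ∃ u v : W, w = wdg W u v} = ⊤ := by
  rw [eq_top_iff]
  rintro u -
  obtain ⟨t, rfl⟩ := Submodule.mkQ_surjective _ u
  induction t using TensorProduct.induction_on with
  | zero => simpa using zero_mem _
  | tmul a b => exact Submodule.subset_span ⟨a, b, rfl⟩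
  | add s t hs ht => rw [map_add]; exact add_mem hs ht

lemma gen_mem (x : V) (u v : SqM V) :
    x ⊗ₜ[ℚ] wdg (SqM V) u v ∈ Submodule.span ℚ
      {z : V ⊗[ℚ] AltM (SqM V) |
        ∃ x a b c d : V, z = x ⊗ₜ[ℚ] wdg (SqM V) (sqm V a b) (sqm V c d)} := by
  set N := Submodule.span ℚ
      {z : V ⊗[ℚ] AltM (SqM V) |
        ∃ x a b c d : V, z = x ⊗ₜ[ℚ] wdg (SqM V) (sqm V a b) (sqm V c d)} with hN
  have step1 : ∀ (a b : V) (v : SqM V),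
      x ⊗ₜ[ℚ] wdg (SqM V) (sqm V a b) v ∈ N := by
    intro a b v
    have hmem : v ∈ (⊤ : Submodule ℚ (SqM V)) := Submodule.mem_top
    rw [← span_sqm_top V] at hmem
    have hle : Submodule.span ℚ {w : SqM V | ∃ a b : V, w = sqm V a b} ≤
        N.comap ((TensorProduct.mk ℚ V (AltM (SqM V)) x) ∘ₗ (wdg (SqM V) (sqm V a b))) := by
      rw [Submodule.span_le]
      rintro w ⟨c, d, rfl⟩
      exact Submodule.subset_span ⟨x, a, b, c, d, rfl⟩
    exact hle hmem
  have hmem : u ∈ (⊤ : Submodule ℚ (SqM V)) := Submodule.mem_top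
  rw [← span_sqm_top V] at hmem
  have hle : Submodule.span ℚ {w : SqM V | ∃ a b : V, w = sqm V a b} ≤
      N.comap ((TensorProduct.mk ℚ V (AltM (SqM V)) x) ∘ₗ (LinearMap.flip (wdg (SqM V)) v)) := by
    rw [Submodule.span_le]
    rintro w ⟨a, b, rfl⟩
    exact step1 a b v
  exact hle hmem

lemma span_gens_top : Submodule.span ℚ
      {z : V ⊗[ℚ] AltM (SqM V) |
        ∃ x a b c d : V, z = x ⊗ₜ[ℚ] wdg (SqM V) (sqm V a b) (sqm V c d)} = ⊤ := by
  rw [eq_top_iff]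
  rintro z -
  induction z using TensorProduct.induction_on with
  | zero => exact zero_mem _
  | add s t hs ht => exact add_mem hs ht
  | tmul x w =>
    have hmem : w ∈ (⊤ : Submodule ℚ (AltM (SqM V))) := Submodule.mem_top
    rw [← span_wdg_top (SqM V)] at hmem
    have hle : Submodule.span ℚ {w : AltM (SqM V) | ∃ u v : SqM V, w = wdg (SqM V) u v} ≤
        Submodule.comap (TensorProduct.mk ℚ V (AltM (SqM V)) x)
          (Submodule.span ℚ {z : V ⊗[ℚ] AltM (SqM V) |
            ∃ x a b c d : V, z = x ⊗ₜ[ℚ] wdg (SqM V) (sqm V a b) (sqm V c d)}) := by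
      rw [Submodule.span_le]
      rintro w ⟨u, v, rfl⟩
      exact gen_mem V x u v
    exact hle hmem

lemma m_star5 (m : (V ⊗[ℚ] AltM (SqM V)) →ₗ[ℚ] (CubM V ⊗[ℚ] SqM V))
    (hm : ∀ (q : V) (u v : SqM V),
      m (q ⊗ₜ[ℚ] wdg (SqM V) u v) = mulC V q u ⊗ₜ[ℚ] v - mulC V q v ⊗ₜ[ℚ] u)
    (x₁ x₂ x₃ x₄ x₅ : V) : m (star5 V x₁ x₂ x₃ x₄ x₅) = 0 := by
  simp only [star5, map_add, hm]
  simp only [sqm_comm V x₅ x₁]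
  simp only [mulC_swap V x₂ x₁ x₅, mulC_swap V x₃ x₁ x₂, mulC_swap V x₄ x₁ x₅,
    mulC_swap V x₄ x₂ x₃, mulC_swap V x₅ x₁ x₂, mulC_swap V x₅ x₃ x₄]
  simp only [sqm_comm V x₃ x₂, sqm_comm V x₄ x₃, sqm_comm V x₅ x₂, sqm_comm V x₅ x₄]
  abel

lemma key (m : (V ⊗[ℚ] AltM (SqM V)) →ₗ[ℚ] (CubM V ⊗[ℚ] SqM V))
    (hm : ∀ (q : V) (u v : SqM V),
      m (q ⊗ₜ[ℚ] wdg (SqM V) u v) = mulC V q u ⊗ₜ[ℚ] v - mulC V q v ⊗ₜ[ℚ] u)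
    (x a b c d : V) :
    sMap V (m (sMap V (m (x ⊗ₜ[ℚ] wdg (SqM V) (sqm V a b) (sqm V c d)))))
      - (7:ℚ) • sMap V (m (x ⊗ₜ[ℚ] wdg (SqM V) (sqm V a b) (sqm V c d)))
      + (10:ℚ) • (x ⊗ₜ[ℚ] wdg (SqM V) (sqm V a b) (sqm V c d))
    = (2:ℚ) • star5 V x a b c d + (2:ℚ) • star5 V x a b d c
      - star5 V x a c b d + star5 V x a c d b
      - star5 V x a d b c + star5 V x a d c b := by
  simp only [hm, map_sub, map_add, sMap_apply, star5]
  simp only [sqm_comm V a x, sqm_comm V b x, sqm_comm V c x, sqm_comm V d x,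
    sqm_comm V b a, sqm_comm V c a, sqm_comm V d a, sqm_comm V c b,
    sqm_comm V d b, sqm_comm V d c]
  simp only [wdg_swap (SqM V) (sqm V c d) (sqm V a b),
    wdg_swap (SqM V) (sqm V b d) (sqm V a c),
    wdg_swap (SqM V) (sqm V b c) (sqm V a d),
    wdg_swap (SqM V) (sqm V c d) (sqm V x b),
    wdg_swap (SqM V) (sqm V b d) (sqm V x c),
    wdg_swap (SqM V) (sqm V b c) (sqm V x d),
    wdg_swap (SqM V) (sqm V c d) (sqm V x a),
    wdg_swap (SqM V) (sqm V a d) (sqm V x c),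
    wdg_swap (SqM V) (sqm V a c) (sqm V x d),
    wdg_swap (SqM V) (sqm V b d) (sqm V x a),
    wdg_swap (SqM V) (sqm V a d) (sqm V x b),
    wdg_swap (SqM V) (sqm V a b) (sqm V x d),
    wdg_swap (SqM V) (sqm V b c) (sqm V x a),
    wdg_swap (SqM V) (sqm V a c) (sqm V x b),
    wdg_swap (SqM V) (sqm V a b) (sqm V x c)]
  simp only [TensorProduct.tmul_neg]
  module

end Aux2

/-- **Lemma 3.18.** For a finite-dimensional `ℚ`-vector space `V`, `R(V) = ker m` is
spanned by the image of `⋆`. -/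
theorem span_star5_eq_ker_m [FiniteDimensional ℚ V]
    (m : (V ⊗[ℚ] AltM (SqM V)) →ₗ[ℚ] (CubM V ⊗[ℚ] SqM V))
    (hm : ∀ (q : V) (u v : SqM V),
      m (q ⊗ₜ[ℚ] wdg (SqM V) u v) = mulC V q u ⊗ₜ[ℚ] v - mulC V q v ⊗ₜ[ℚ] u) :
    Submodule.span ℚ
        {w : V ⊗[ℚ] AltM (SqM V) | ∃ x₁ x₂ x₃ x₄ x₅ : V, w = star5 V x₁ x₂ x₃ x₄ x₅}
      = LinearMap.ker m := by
  apply le_antisymm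
  · rw [Submodule.span_le]
    rintro w ⟨x₁, x₂, x₃, x₄, x₅, rfl⟩
    exact LinearMap.mem_ker.2 (m_star5 V m hm x₁ x₂ x₃ x₄ x₅)
  · intro z hz
    have hz0 : m z = 0 := LinearMap.mem_ker.1 hz
    set N := Submodule.span ℚ
        {w : V ⊗[ℚ] AltM (SqM V) | ∃ x₁ x₂ x₃ x₄ x₅ : V, w = star5 V x₁ x₂ x₃ x₄ x₅} with hN
    set T : (V ⊗[ℚ] AltM (SqM V)) →ₗ[ℚ] (V ⊗[ℚ] AltM (SqM V)) := sMap V ∘ₗ m with hT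
    set P : (V ⊗[ℚ] AltM (SqM V)) →ₗ[ℚ] (V ⊗[ℚ] AltM (SqM V)) :=
      T ∘ₗ T - (7:ℚ) • T + (10:ℚ) • LinearMap.id with hP
    have hPgen : ∀ g ∈ {z : V ⊗[ℚ] AltM (SqM V) |
        ∃ x a b c d : V, z = x ⊗ₜ[ℚ] wdg (SqM V) (sqm V a b) (sqm V c d)}, P g ∈ N := by
      rintro g ⟨x, a, b, c, d, rfl⟩
      have hPg : P (x ⊗ₜ[ℚ] wdg (SqM V) (sqm V a b) (sqm V c d))
          = (2:ℚ) • star5 V x a b c d + (2:ℚ) • star5 V x a b d c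
            - star5 V x a c b d + star5 V x a c d b
            - star5 V x a d b c + star5 V x a d c b := by
        rw [hP, hT]
        simp only [LinearMap.add_apply, LinearMap.sub_apply, LinearMap.smul_apply,
          LinearMap.comp_apply, LinearMap.id_apply]
        exact key V m hm x a b c d
      rw [hPg]
      have h1 : ∀ y₁ y₂ y₃ y₄ y₅ : V, star5 V y₁ y₂ y₃ y₄ y₅ ∈ N :=
        fun y₁ y₂ y₃ y₄ y₅ => Submodule.subset_span ⟨y₁, y₂, y₃, y₄, y₅, rfl⟩
      exact add_mem (sub_mem (add_mem (sub_mem (add_mem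
        (Submodule.smul_mem N _ (h1 x a b c d)) (Submodule.smul_mem N _ (h1 x a b d c)))
        (h1 x a c b d)) (h1 x a c d b)) (h1 x a d b c)) (h1 x a d c b)
    have hrange : LinearMap.range P ≤ N := by
      rw [LinearMap.range_eq_map, ← span_gens_top V, Submodule.map_span, Submodule.span_le]
      rintro w ⟨g, hg, rfl⟩
      exact hPgen g hg
    have hPz : P z = (10:ℚ) • z := by
      rw [hP, hT]
      simp only [LinearMap.add_apply, LinearMap.sub_apply, LinearMap.smul_apply,
        LinearMap.comp_apply, LinearMap.id_apply, hz0, map_zero, smul_zero, sub_zero, zero_sub]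
      abel
    have h10 : (10:ℚ) • z ∈ N := hPz ▸ hrange (LinearMap.mem_range_self P z)
    have := Submodule.smul_mem N ((10:ℚ)⁻¹) h10
    rwa [smul_smul, show ((10:ℚ)⁻¹ * 10) = 1 by norm_num, one_smul] at this

end
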